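/- Let m ≥ 2 be an integer and δ = 2 if m = 2, δ = 1 if m ≥ 3. Define d_0^m = 1, d_n^m = (2n+m−1)(n+m−2)!/(n! m!) for n ≥ 1, and let (λₙ)_{n≥1} be the block-ordered sequence whose first entry is 1 and whose (n+1)-th block (n ≥ 1) consists of d_n^m entries all equal to n^{−(2n+m−1)}. Then for every positive sequence (αₙ) with αₙ = o(n^{1/m}), the series ∑_{n=1}^{∞} n^{(n^{1/m})/(δm) + αₙ} λₙ converges. -/

import Mathlib

/- The series `∑ n^{n^{1/m}/(δm)+αₙ} λₙ` converges for the explicit block-ordered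
eigenvalue sequence of the optimality example and every positive `αₙ = o(n^{1/m})`. -/

open Filter Topology

/-- `d_n^m`: `d_0^m = 1` and `d_n^m = (2n+m-1)(n+m-2)!/(n! m!)` for `n ≥ 1`
(exact division). -/
def dDim (m n : ℕ) : ℕ :=
  if n = 0 then 1 else
    (2 * n + m - 1) * (n + m - 2).factorial / (n.factorial * m.factorial)

/-- `d_n^{m+1} = ∑_{k=0}^n d_k^m`: the index of the last entry of the `(n+1)`-th block. -/
def dDim' (m n : ℕ) : ℕ := ∑ k ∈ Finset.range (n + 1), dDim m k

lemma factorial_add_prod (k r : ℕ) :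
    (k + r).factorial = k.factorial * ∏ i ∈ Finset.range r, (k + 1 + i) := by
  induction r with
  | zero => simp
  | succ r ih =>
      rw [Finset.prod_range_succ, ← mul_assoc, ← ih, show k + (r+1) = (k+r)+1 by ring,
        Nat.factorial_succ]
      ring

lemma prod_add_two (r : ℕ) : ∏ i ∈ Finset.range r, (i + 2) = (r + 1).factorial := by
  induction r with
  | zero => simp
  | succ r ih => rw [Finset.prod_range_succ, ih, mul_comm, ← Nat.factorial_succ]

lemma dDim_eq (m' k : ℕ) (hk : k ≠ 0) :
    dDim (m' + 2) k = (2 * k + m' + 1) * (k + m').factorial / (k.factorial * (m' + 2).factorial) := by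
  simp only [dDim, if_neg hk]
  congr 2 <;> omega

lemma dDim_one_le (m' k : ℕ) : 1 ≤ dDim (m' + 2) k := by
  rcases Nat.eq_zero_or_pos k with rfl | hk
  · simp [dDim]
  rw [dDim_eq m' k hk.ne', Nat.one_le_div_iff (by positivity)]
  have h1 : (k + m').factorial = (k + m').choose m' * m'.factorial * k.factorial := by
    have := Nat.choose_mul_factorial_mul_factorial (show m' ≤ k + m' by omega)
    simpa [Nat.add_sub_cancel] using this.symm
  have h2 : m' + 1 ≤ (k + m').choose m' := by
    calc m' + 1 = (m' + 1).choose m' := (Nat.choose_succ_self_right m').symm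
    _ ≤ (k + m').choose m' := Nat.choose_le_choose m' (by omega)
  calc k.factorial * (m' + 2).factorial
      = (m' + 2) * ((m' + 1) * (m'.factorial * k.factorial)) := by
        rw [Nat.factorial_succ, Nat.factorial_succ]; ring
    _ ≤ (2 * k + m' + 1) * ((k + m').choose m' * (m'.factorial * k.factorial)) := by
        apply Nat.mul_le_mul (by omega)
        exact Nat.mul_le_mul_right _ (by omega)
    _ = (2 * k + m' + 1) * (k + m').factorial := by rw [h1]; ring

lemma dDim_le (m' k : ℕ) (hk : 1 ≤ k) : dDim (m' + 2) k ≤ 2 * k ^ (m' + 1) := by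
  rw [dDim_eq m' k (by omega)]
  apply Nat.div_le_of_le_mul
  have h1 : (k + m').factorial = k.factorial * ∏ i ∈ Finset.range m', (k + 1 + i) :=
    factorial_add_prod k m'
  have h2 : ∏ i ∈ Finset.range m', (k + 1 + i) ≤ (m' + 1).factorial * k ^ m' := by
    calc ∏ i ∈ Finset.range m', (k + 1 + i) ≤ ∏ i ∈ Finset.range m', ((i + 2) * k) := by
          apply Finset.prod_le_prod' ; intro i _; nlinarith
      _ = (∏ i ∈ Finset.range m', (i + 2)) * k ^ m' := by
          rw [Finset.prod_mul_distrib, Finset.prod_const, Finset.card_range]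
      _ = (m' + 1).factorial * k ^ m' := by rw [prod_add_two]
  calc (2 * k + m' + 1) * (k + m').factorial
      = (2 * k + m' + 1) * (k.factorial * ∏ i ∈ Finset.range m', (k + 1 + i)) := by rw [h1]
    _ ≤ ((m' + 3) * k) * (k.factorial * ((m' + 1).factorial * k ^ m')) := by
        apply Nat.mul_le_mul (by nlinarith) (Nat.mul_le_mul_left _ h2)
    _ ≤ k.factorial * (m' + 2).factorial * (2 * k ^ (m' + 1)) := by
        have : (m' + 3) * (m' + 1).factorial ≤ 2 * (m' + 2).factorial := by
          rw [Nat.factorial_succ (m'+1)]; nlinarith [Nat.one_le_iff_ne_zero.mpr (Nat.factorial_ne_zero (m'+1))]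
        calc ((m' + 3) * k) * (k.factorial * ((m' + 1).factorial * k ^ m'))
            = ((m' + 3) * (m' + 1).factorial) * (k.factorial * (k * k ^ m')) := by ring
          _ ≤ (2 * (m' + 2).factorial) * (k.factorial * (k * k ^ m')) := Nat.mul_le_mul_right _ this
          _ = k.factorial * (m' + 2).factorial * (2 * k ^ (m' + 1)) := by rw [pow_succ]; ring

lemma dDim'_ge (m' n : ℕ) : n + 1 ≤ dDim' (m' + 2) n := by
  calc n + 1 = ∑ _k ∈ Finset.range (n + 1), 1 := by simp
    _ ≤ dDim' (m' + 2) n := Finset.sum_le_sum fun k _ => dDim_one_le m' k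

lemma dDim'_mono (m : ℕ) : Monotone (dDim' m) := fun a b h =>
  Finset.sum_le_sum_of_subset (Finset.range_subset_range.mpr (by omega))

lemma dDim'_le (m' n : ℕ) (hn : 1 ≤ n) : dDim' (m' + 2) n ≤ 3 * n ^ (m' + 2) := by
  have h : dDim' (m' + 2) n ≤ 1 + 2 * n ^ (m' + 2) := by
    rw [dDim', Finset.sum_range_succ']
    have hd0 : dDim (m' + 2) 0 = 1 := by simp [dDim]
    have : ∑ i ∈ Finset.range n, dDim (m' + 2) (i + 1) ≤ 2 * n ^ (m' + 2) := by
      calc ∑ i ∈ Finset.range n, dDim (m' + 2) (i + 1)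
          ≤ ∑ _i ∈ Finset.range n, 2 * n ^ (m' + 1) := by
            apply Finset.sum_le_sum; intro i hi
            refine (dDim_le m' (i+1) (by omega)).trans ?_
            have : i + 1 ≤ n := by simpa using Finset.mem_range.mp hi
            exact Nat.mul_le_mul_left _ (Nat.pow_le_pow_left this _)
        _ = n * (2 * n ^ (m' + 1)) := by rw [Finset.sum_const]; simp [mul_comm]
        _ = 2 * n ^ (m' + 2) := by rw [pow_succ]; ring
    omega
  have : 1 ≤ n ^ (m' + 2) := Nat.one_le_pow _ _ (by omega)
  omega

lemma block_exists (m' : ℕ) (j : ℕ) (hj : 2 ≤ j) :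
    ∃ n, 1 ≤ n ∧ dDim' (m' + 2) (n - 1) < j ∧ j ≤ dDim' (m' + 2) n := by
  have hex : ∃ n, j ≤ dDim' (m' + 2) n := ⟨j, by have := dDim'_ge m' j; omega⟩
  classical
  refine ⟨Nat.find hex, ?_, ?_, Nat.find_spec hex⟩
  · by_contra h
    have h0 : Nat.find hex = 0 := by omega
    have := Nat.find_spec hex
    rw [h0] at this
    simp [dDim', dDim] at this
    omega
  · have h1 : 1 ≤ Nat.find hex := by
      by_contra h
      have h0 : Nat.find hex = 0 := by omega
      have := Nat.find_spec hex
      rw [h0] at this; simp [dDim', dDim] at this; omega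
    have := Nat.find_min hex (show Nat.find hex - 1 < Nat.find hex by omega)
    omega


lemma core_ineq (m n j : ℕ) (hm : 2 ≤ m) (hnm : 22 * m ≤ n)
    (hlog : (22:ℝ) ≤ Real.log n) (hj : 2 ≤ j)
    (hjn : (j:ℝ) ≤ 3 * (n:ℝ) ^ (m:ℕ)) (e : ℝ) (he0 : 0 ≤ e)
    (he : e ≤ (j:ℝ) ^ ((m:ℝ))⁻¹ * (1/(m:ℝ) + 1/(56*(m:ℝ)))) :
    (e + 2) * Real.log j ≤ (2*(n:ℝ) + (m:ℝ) - 1) * Real.log n := by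
  have hM2 : (2:ℝ) ≤ (m:ℝ) := by exact_mod_cast hm
  have hM0 : (0:ℝ) < m := by linarith
  have hn44 : (44:ℕ) ≤ n := le_trans (by nlinarith [hm]) hnm
  have hn0 : (0:ℝ) < n := by exact_mod_cast Nat.lt_of_lt_of_le (by norm_num) hn44
  have hj0 : (0:ℝ) < j := by exact_mod_cast Nat.lt_of_lt_of_le (by norm_num) hj
  have hj1 : (1:ℝ) ≤ j := by exact_mod_cast hj.trans' (by norm_num)
  have hL0 : (0:ℝ) < Real.log n := by linarith
  have hLj0 : (0:ℝ) ≤ Real.log j := Real.log_nonneg hj1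
  set t : ℝ := (j:ℝ) ^ ((m:ℝ))⁻¹ with ht
  have ht0 : 0 ≤ t := Real.rpow_nonneg hj0.le _
  -- t ≤ (7/4) n
  have htn : t ≤ 7/4 * n := by
    have h1 : t ≤ (3 * (n:ℝ) ^ (m:ℕ)) ^ ((m:ℝ))⁻¹ :=
      Real.rpow_le_rpow hj0.le hjn (by positivity)
    have h2 : (3 * (n:ℝ) ^ (m:ℕ)) ^ ((m:ℝ))⁻¹ = 3 ^ ((m:ℝ))⁻¹ * n := by
      rw [Real.mul_rpow (by norm_num) (by positivity), ← Real.rpow_natCast (n:ℝ) m,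
        ← Real.rpow_mul hn0.le, mul_inv_cancel₀ (ne_of_gt hM0), Real.rpow_one]
    have h3 : (3:ℝ) ^ ((m:ℝ))⁻¹ ≤ 7/4 := by
      have a1 : (3:ℝ) ^ ((m:ℝ))⁻¹ ≤ (3:ℝ) ^ ((2:ℝ))⁻¹ := by
        apply Real.rpow_le_rpow_of_exponent_le (by norm_num)
        rw [inv_le_inv₀ hM0 (by norm_num)]; exact hM2
      have a2 : (3:ℝ) ^ ((2:ℝ))⁻¹ = Real.sqrt 3 := by
        rw [Real.sqrt_eq_rpow]; norm_num
      have a3 : Real.sqrt 3 ≤ 7/4 := by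
        rw [show (7/4:ℝ) = Real.sqrt ((7/4)^2) from (Real.sqrt_sq (by norm_num)).symm]
        exact Real.sqrt_le_sqrt (by norm_num)
      linarith
    calc t ≤ 3 ^ ((m:ℝ))⁻¹ * n := by rw [← h2]; exact h1
      _ ≤ 7/4 * n := by nlinarith
  -- log j ≤ 2 + m log n
  have hLjb : Real.log j ≤ 2 + (m:ℝ) * Real.log n := by
    have h1 : Real.log j ≤ Real.log (3 * (n:ℝ) ^ (m:ℕ)) := Real.log_le_log hj0 hjn
    rw [Real.log_mul (by norm_num) (by positivity), Real.log_pow] at h1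
    have h2 : Real.log 3 ≤ 2 := by
      have := Real.log_le_sub_one_of_pos (show (0:ℝ) < 3 by norm_num); linarith
    linarith
  -- main computation
  have step1 : (e + 2) * Real.log j ≤ (t * (1/(m:ℝ) + 1/(56*(m:ℝ))) + 2) * (2 + (m:ℝ) * Real.log n) := by
    apply mul_le_mul (by linarith) hLjb hLj0
    have : 0 ≤ t * (1/(m:ℝ) + 1/(56*(m:ℝ))) := by positivity
    linarith
  have hu1 : (1/(m:ℝ) + 1/(56*(m:ℝ))) * (m:ℝ) = 57/56 := by field_simp; ring
  have hu2 : (1/(m:ℝ) + 1/(56*(m:ℝ))) ≤ 57/112 := by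
    have b1 : 1/(m:ℝ) ≤ 1/2 := by rw [div_le_div_iff₀ hM0 (by norm_num)]; linarith
    have b2 : 1/(56*(m:ℝ)) ≤ 1/112 := by rw [div_le_div_iff₀ (by positivity) (by norm_num)]; linarith
    linarith
  have hu0 : 0 ≤ (1/(m:ℝ) + 1/(56*(m:ℝ))) := by positivity
  have hxm : 22 * (m:ℝ) ≤ n := by exact_mod_cast hnm
  have hx44 : (44:ℝ) ≤ n := by exact_mod_cast hn44
  set u : ℝ := 1/(m:ℝ) + 1/(56*(m:ℝ))
  set L : ℝ := Real.log n
  set x : ℝ := (n:ℝ)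
  set M : ℝ := (m:ℝ)
  -- goal after step1: (t*u + 2) * (2 + M*L) ≤ (2x + M - 1) * L
  have step2 : (t * u + 2) * (2 + M * L) ≤ (2*x + M - 1) * L := by
    have c2 : t * L ≤ 7/4 * x * L := mul_le_mul_of_nonneg_right htn hL0.le
    have c3 : t * u * (M * L) ≤ 57/32 * (x * L) := by
      have : t * u * (M * L) = (t * L) * (u * M) := by ring
      rw [this, hu1]; linarith
    have c4 : t * u ≤ 57/64 * x := by
      have := mul_le_mul htn hu2 hu0 (by positivity : (0:ℝ) ≤ 7/4 * x)
      linarith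
    have c5 : M * L ≤ (1/22) * (x * L) := by
      have := mul_le_mul_of_nonneg_right hxm hL0.le; linarith
    have c6 : x ≤ (1/22) * (x * L) := by
      have := mul_le_mul_of_nonneg_left hlog (by positivity : (0:ℝ) ≤ x); linarith
    have c7 : (4:ℝ) ≤ L := by linarith
    have c8 : L ≤ (1/44) * (x * L) := by
      have := mul_le_mul_of_nonneg_right hx44 hL0.le; linarith
    have hxL : 0 ≤ x * L := by positivity
    have expand : (t * u + 2) * (2 + M * L) = 2 * (t * u) + t * u * (M * L) + 4 + 2 * (M * L) := by ring
    rw [expand]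
    have goal2 : 2 * (t * u) + t * u * (M * L) + 4 + 2 * (M * L) ≤
        2 * (57/64 * x) + 57/32 * (x * L) + 4 + 2 * ((1/22) * (x * L)) := by linarith
    have goal3 : 2 * (57/64 * x) + 57/32 * (x * L) + 4 + 2 * ((1/22) * (x * L)) ≤ (2*x + M - 1) * L := by
      have heq : (2*x + M - 1) * L = 2 * (x * L) + M * L - L := by ring
      rw [heq]
      have d1 : 2 * (57/64 * x) ≤ 2 * (57/64) * ((1/22) * (x * L)) := by linarith
      have d2 : (0:ℝ) ≤ M * L := by positivity
      linarith
    exact goal2.trans goal3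
  linarith

theorem block_sequence_series_converges
    (m : ℕ) (hm : 2 ≤ m)
    (δ : ℝ) (hδ : δ = if m = 2 then 2 else 1)
    -- the block-ordered sequence: first entry `1`, and the `(n+1)`-th block (`n ≥ 1`)
    -- consists of the `d_n^m` entries, at indices `d_{n-1}^{m+1}+1, …, d_n^{m+1}`,
    -- all equal to `n^{-(2n+m-1)}`
    (lam : ℕ → ℝ) (hlam1 : lam 1 = 1)
    (hlam : ∀ n : ℕ, 1 ≤ n → ∀ j : ℕ, dDim' m (n - 1) < j → j ≤ dDim' m n →
      lam j = (n : ℝ) ^ (-(2 * (n : ℝ) + m - 1)))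
    -- a positive sequence with `αₙ = o(n^{1/m})`
    (α : ℕ → ℝ) (hαpos : ∀ n, 0 < α n)
    (hα : (fun n : ℕ => α n) =o[atTop] fun n : ℕ => (n : ℝ) ^ ((m : ℝ))⁻¹) :
    Summable (fun n : ℕ =>
      (n : ℝ) ^ ((n : ℝ) ^ ((m : ℝ))⁻¹ / (δ * m) + α n) * lam n) := by
  obtain ⟨m', rfl⟩ : ∃ m', m = m' + 2 := ⟨m - 2, by omega⟩
  have hδ1 : 1 ≤ δ := by rw [hδ]; split_ifs <;> norm_num
  have hδ0 : 0 < δ := by linarith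
  have hM0 : (0:ℝ) < ((m' + 2 : ℕ):ℝ) := by positivity
  have hε : (0:ℝ) < 1/(56*((m' + 2 : ℕ):ℝ)) := by positivity
  have hαb := hα.def hε
  have hlogev : ∀ᶠ (n:ℕ) in atTop, (22:ℝ) ≤ Real.log n :=
    (Real.tendsto_log_atTop.comp tendsto_natCast_atTop_atTop).eventually_ge_atTop 22
  obtain ⟨N, hN⟩ := eventually_atTop.mp (hlogev.and (eventually_ge_atTop (22*(m' + 2))))
  apply Summable.of_norm_bounded_eventually (g := fun j : ℕ => (j:ℝ)^(-2:ℝ))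
    (Real.summable_nat_rpow.mpr (by norm_num))
  rw [Nat.cofinite_eq_atTop]
  filter_upwards [hαb, eventually_ge_atTop (max 2 (dDim' (m' + 2) N + 1))] with j hαj hjbig
  have hj2 : 2 ≤ j := le_trans (le_max_left _ _) hjbig
  have hjD : dDim' (m' + 2) N < j := by have := le_trans (le_max_right _ _) hjbig; omega
  obtain ⟨n, hn1, hlt, hle⟩ := block_exists m' j hj2
  have hNn : N < n := by
    by_contra h
    push_neg at h
    have := dDim'_mono (m' + 2) h
    omega
  obtain ⟨hlogn, hnm⟩ := hN n hNn.le
  have hlamj := hlam n hn1 j hlt hle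
  have hjn : (j:ℝ) ≤ 3 * (n:ℝ) ^ (m' + 2 : ℕ) := by
    have h1 : j ≤ 3 * n ^ (m' + 2) := le_trans hle (dDim'_le m' n hn1)
    exact_mod_cast h1
  have hjpos : (0:ℝ) < (j:ℝ) := by
    have : (0:ℕ) < j := by omega
    exact_mod_cast this
  have hnpos : (0:ℝ) < (n:ℝ) := by
    have : (0:ℕ) < n := by omega
    exact_mod_cast this
  set t : ℝ := (j:ℝ) ^ (((m' + 2 : ℕ):ℝ))⁻¹ with ht
  have ht0 : 0 ≤ t := Real.rpow_nonneg hjpos.le _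
  set e : ℝ := t / (δ * ((m' + 2 : ℕ):ℝ)) + α j with he
  have he0 : 0 ≤ e := by
    rw [he]
    have h1 : 0 ≤ t / (δ * ((m' + 2 : ℕ):ℝ)) := by positivity
    have h2 := (hαpos j).le
    linarith
  have heb : e ≤ t * (1/((m' + 2 : ℕ):ℝ) + 1/(56*((m' + 2 : ℕ):ℝ))) := by
    have p1 : t / (δ * ((m' + 2 : ℕ):ℝ)) ≤ t * (1/((m' + 2 : ℕ):ℝ)) := by
      rw [mul_one_div]
      apply div_le_div_of_nonneg_left ht0 hM0
      nlinarith
    have p2 : α j ≤ t * (1/(56*((m' + 2 : ℕ):ℝ))) := by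
      have h1 : ‖α j‖ ≤ 1/(56*((m' + 2 : ℕ):ℝ)) * ‖(j:ℝ) ^ (((m' + 2 : ℕ):ℝ))⁻¹‖ := hαj
      rw [Real.norm_eq_abs, Real.norm_eq_abs, abs_of_pos (hαpos j), abs_of_nonneg ht0] at h1
      linarith
    rw [he, mul_add]
    linarith
  have hcore := core_ineq (m' + 2) n j (by omega) hnm hlogn hj2 hjn e he0 heb
  have h1 : (j:ℝ) ^ (e + 2) ≤ (n:ℝ) ^ (2*(n:ℝ) + ((m' + 2 : ℕ):ℝ) - 1) := by
    rw [Real.rpow_def_of_pos hjpos, Real.rpow_def_of_pos hnpos]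
    exact Real.exp_le_exp.mpr (by linear_combination hcore)
  set C : ℝ := 2*(n:ℝ) + ((m' + 2 : ℕ):ℝ) - 1 with hC
  have key : (j:ℝ) ^ e * (n:ℝ) ^ (-C) ≤ (j:ℝ) ^ (-2:ℝ) := by
    have hsplit : (j:ℝ) ^ e = (j:ℝ) ^ (e + 2) * (j:ℝ) ^ (-2:ℝ) := by
      rw [← Real.rpow_add hjpos]; ring_nf
    calc (j:ℝ) ^ e * (n:ℝ) ^ (-C)
        = ((j:ℝ) ^ (e+2) * (n:ℝ) ^ (-C)) * (j:ℝ) ^ (-2:ℝ) := by rw [hsplit]; ring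
      _ ≤ ((n:ℝ) ^ C * (n:ℝ) ^ (-C)) * (j:ℝ) ^ (-2:ℝ) := by
          apply mul_le_mul_of_nonneg_right _ (Real.rpow_nonneg hjpos.le _)
          exact mul_le_mul_of_nonneg_right h1 (Real.rpow_nonneg hnpos.le _)
      _ = (j:ℝ) ^ (-2:ℝ) := by rw [← Real.rpow_add hnpos]; simp
  rw [hlamj]
  have hexp : -(2 * (n:ℝ) + ((m' + 2 : ℕ):ℝ) - 1) = -C := by rw [hC]
  rw [Real.norm_eq_abs, abs_of_nonneg (by positivity)]
  rw [hexp]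
  calc (j:ℝ) ^ ((j:ℝ) ^ (((m' + 2 : ℕ):ℝ))⁻¹ / (δ * ((m' + 2 : ℕ):ℝ)) + α j) * (n:ℝ) ^ (-C)
      = (j:ℝ) ^ e * (n:ℝ) ^ (-C) := by rw [he, ht]
    _ ≤ (j:ℝ) ^ (-2:ℝ) := key
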